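/- arXiv:1805.09095 — 2 statements merged into one kernel-verified Lean document; each statement's English description precedes it below -/
import Mathlib

section
/- Let q : 𝔻 → ℂ be holomorphic and set μ(z) = ((1-|z|²)²/4) · conj(q(z)). If ‖μ‖²_WP := ∫_𝔻 |μ(z)|² dA(z) < ∞, then sup_{z ∈ 𝔻} |μ(z)| ≤ √(3/(4π)) · ‖μ‖_WP. -/
open MeasureTheory Complex

/-- The hyperbolic metric density `ρ(z) = 4/(1-|z|²)²` on the unit disk. -/
noncomputable def rho (z : ℂ) : ℝ := 4 / (1 - ‖z‖ ^ 2) ^ 2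

section AuxHarnack

open Metric Set intervalIntegral



lemma det_restrictScalars_smulRight (c : ℂ) :
    ((ContinuousLinearMap.smulRight (1 : ℂ →L[ℂ] ℂ) c).restrictScalars ℝ).det
      = Complex.normSq c := by
  have h : LinearMap.toMatrix Complex.basisOneI Complex.basisOneI
      (((ContinuousLinearMap.smulRight (1 : ℂ →L[ℂ] ℂ) c).restrictScalars ℝ) :
        ℂ →ₗ[ℝ] ℂ) = !![c.re, -c.im; c.im, c.re] := by
    ext i j
    fin_cases i <;> fin_cases j <;>
      simp [LinearMap.toMatrix_apply, Complex.coe_basisOneI_repr, Complex.coe_basisOneI,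
        smul_eq_mul, mul_comm]
  rw [ContinuousLinearMap.det, ← LinearMap.det_toMatrix Complex.basisOneI, h,
    Matrix.det_fin_two_of]
  simp [Complex.normSq_apply]

lemma normSq_identity' (w u : ℂ) :
    Complex.normSq (1 + (starRingEnd ℂ) w * u) - Complex.normSq (u + w)
      = (1 - Complex.normSq u) * (1 - Complex.normSq w) := by
  simp only [Complex.normSq_apply, Complex.add_re, Complex.add_im, Complex.mul_re,
    Complex.mul_im, Complex.one_re, Complex.one_im, Complex.conj_re, Complex.conj_im]
  ring

lemma norm_lt_one_iff_normSq (z : ℂ) : ‖z‖ < 1 ↔ Complex.normSq z < 1 := by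
  rw [← Complex.sq_norm]
  constructor <;> intro h <;> nlinarith [norm_nonneg z]

noncomputable def mob (w u : ℂ) : ℂ := (u + w) / (1 + (starRingEnd ℂ) w * u)

noncomputable def mobD (w u : ℂ) : ℂ :=
  (1 - w * (starRingEnd ℂ) w) / (1 + (starRingEnd ℂ) w * u) ^ 2

lemma mob_denom_ne (w u : ℂ) (hw : ‖w‖ < 1) (hu : ‖u‖ < 1) :
    1 + (starRingEnd ℂ) w * u ≠ 0 := by
  intro h
  have h1 : (starRingEnd ℂ) w * u = -1 := by linear_combination h - 1
  have h2 : ‖(starRingEnd ℂ) w * u‖ = 1 := by rw [h1]; simp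
  rw [norm_mul, RCLike.norm_conj] at h2
  nlinarith [norm_nonneg u, norm_nonneg w]

lemma one_sub_mul_conj_ne (w : ℂ) (hw : ‖w‖ < 1) : 1 - w * (starRingEnd ℂ) w ≠ 0 := by
  rw [Complex.mul_conj]
  have : Complex.normSq w < 1 := (norm_lt_one_iff_normSq w).mp hw
  intro h
  have : (1 - Complex.normSq w : ℝ) = 0 := by
    exact_mod_cast (by push_cast; linear_combination h : ((1 - Complex.normSq w : ℝ) : ℂ) = 0)
  linarith

lemma mob_norm_identity (w u : ℂ) (hw : ‖w‖ < 1) (hu : ‖u‖ < 1) :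
    1 - ‖mob w u‖ ^ 2 = (1 - ‖u‖ ^ 2) * ‖mobD w u‖ := by
  have hd := mob_denom_ne w u hw hu
  have hnd : Complex.normSq (1 + (starRingEnd ℂ) w * u) ≠ 0 := by
    simpa [Complex.normSq_eq_zero] using hd
  have h1 : ‖mob w u‖ ^ 2
      = Complex.normSq (u + w) / Complex.normSq (1 + (starRingEnd ℂ) w * u) := by
    rw [mob, norm_div, div_pow,
      Complex.sq_norm, Complex.sq_norm]
  have h2 : ‖mobD w u‖
      = (1 - Complex.normSq w) / Complex.normSq (1 + (starRingEnd ℂ) w * u) := by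
    rw [mobD, norm_div, Complex.mul_conj]
    have hnw : Complex.normSq w < 1 := (norm_lt_one_iff_normSq w).mp hw
    have : ‖(1 : ℂ) - (Complex.normSq w : ℂ)‖ = 1 - Complex.normSq w := by
      rw [← Complex.ofReal_one, ← Complex.ofReal_sub, Complex.norm_real,
        Real.norm_eq_abs, abs_of_pos (by linarith)]
    rw [this, norm_pow, Complex.sq_norm]
  have h3 : ‖u‖ ^ 2 = Complex.normSq u := by
    rw [← Complex.sq_norm]
  rw [h1, h2, h3]
  have := normSq_identity' w u
  rw [mul_div_assoc', eq_div_iff hnd, sub_mul, div_mul_cancel₀ _ hnd, one_mul]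
  linarith [mul_comm (1 - Complex.normSq u) (1 - Complex.normSq w)]

lemma mob_norm_lt (w u : ℂ) (hw : ‖w‖ < 1) (hu : ‖u‖ < 1) : ‖mob w u‖ < 1 := by
  have h := mob_norm_identity w u hw hu
  have hnsu : Complex.normSq u < 1 := (norm_lt_one_iff_normSq u).mp hu
  have h3 : ‖u‖ ^ 2 = Complex.normSq u := by rw [← Complex.sq_norm]
  have hD : 0 < ‖mobD w u‖ := by
    rw [norm_pos_iff, mobD]
    exact div_ne_zero (one_sub_mul_conj_ne w hw) (pow_ne_zero _ (mob_denom_ne w u hw hu))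
  have : 0 < 1 - ‖mob w u‖ ^ 2 := by
    rw [h]; apply mul_pos _ hD; rw [h3]; linarith
  nlinarith [norm_nonneg (mob w u)]

lemma mob_hasDerivAt (w u : ℂ) (hd : 1 + (starRingEnd ℂ) w * u ≠ 0) :
    HasDerivAt (mob w) (mobD w u) u := by
  have h1 : HasDerivAt (fun v : ℂ => v + w) 1 u := (hasDerivAt_id u).add_const w
  have h2 : HasDerivAt (fun v : ℂ => 1 + (starRingEnd ℂ) w * v) ((starRingEnd ℂ) w) u := by
    simpa using ((hasDerivAt_id u).const_mul ((starRingEnd ℂ) w)).const_add 1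
  have := h1.div h2 hd
  have e : mobD w u = (1 * (1 + (starRingEnd ℂ) w * u) - (u + w) * (starRingEnd ℂ) w)
      / (1 + (starRingEnd ℂ) w * u) ^ 2 := by
    simp only [mobD]; ring
  rw [e]; exact this

lemma mob_mob (w z : ℂ) (hw : ‖w‖ < 1) (hz : ‖z‖ < 1) : mob w (mob (-w) z) = z := by
  have hd2 : 1 + (starRingEnd ℂ) (-w) * z ≠ 0 :=
    mob_denom_ne (-w) z (by simpa using hw) hz
  have hm : ‖mob (-w) z‖ < 1 := mob_norm_lt (-w) z (by simpa using hw) hz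
  have hd1 : 1 + (starRingEnd ℂ) w * mob (-w) z ≠ 0 := mob_denom_ne w _ hw hm
  have hne : 1 - w * (starRingEnd ℂ) w ≠ 0 := one_sub_mul_conj_ne w hw
  have hD : (1 : ℂ) - (starRingEnd ℂ) w * z ≠ 0 := by
    have := hd2; simpa [sub_eq_add_neg] using this
  have hD' : (1 : ℂ) - z * (starRingEnd ℂ) w ≠ 0 := by rwa [mul_comm]
  have e1 : mob (-w) z = (z - w) / (1 - (starRingEnd ℂ) w * z) := by
    simp only [mob, map_neg, neg_mul, ← sub_eq_add_neg]
  rw [e1] at hd1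
  conv_lhs => rw [e1]
  simp only [mob]
  rw [div_eq_iff hd1]
  field_simp [hD, hD']
  ring


lemma polar_det (p : ℝ × ℝ) :
    (LinearMap.toContinuousLinearMap (Matrix.toLin (Module.Basis.finTwoProd ℝ) (Module.Basis.finTwoProd ℝ)
      !![Real.cos p.2, -p.1 * Real.sin p.2; Real.sin p.2, p.1 * Real.cos p.2])).det = p.1 := by
  conv_rhs => rw [← one_mul p.1, ← Real.cos_sq_add_sin_sq p.2]
  simp only [neg_mul, LinearMap.det_toContinuousLinearMap, LinearMap.det_toLin,
    Matrix.det_fin_two_of, sub_neg_eq_add]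
  ring

lemma psymm_eq (p : ℝ × ℝ) :
    Complex.measurableEquivRealProd.symm (polarCoord.symm p)
      = Complex.polarCoord.symm p := rfl

lemma polar_step (G : ℂ → ℝ) (hGint : IntegrableOn G (Metric.ball (0:ℂ) 1)) :
    (∫ z in Metric.ball (0:ℂ) 1, G z)
      = (∫ p in (Set.Ioo (0:ℝ) 1 ×ˢ Set.Ioo (-Real.pi) Real.pi),
          p.1 * G (Complex.polarCoord.symm p))
    ∧ IntegrableOn (fun p => p.1 * G (Complex.polarCoord.symm p))
        (Set.Ioo (0:ℝ) 1 ×ˢ Set.Ioo (-Real.pi) Real.pi) := by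
  set S : Set (ℝ × ℝ) := Set.Ioo (0:ℝ) 1 ×ˢ Set.Ioo (-Real.pi) Real.pi with hS
  have hSmeas : MeasurableSet S := measurableSet_Ioo.prod measurableSet_Ioo
  have hSsub : S ⊆ polarCoord.target := by
    rintro ⟨r, θ⟩ ⟨hr, hθ⟩
    exact ⟨hr.1, hθ⟩
  have hnorm : ∀ p : ℝ × ℝ, ‖Complex.polarCoord.symm p‖ = |p.1| := by
    intro p
    rw [Complex.norm_polarCoord_symm]
  -- equality part
  have heq : (∫ z in Metric.ball (0:ℂ) 1, G z)
      = ∫ p in S, p.1 * G (Complex.polarCoord.symm p) := by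
    rw [← MeasureTheory.integral_indicator measurableSet_ball,
      ← Complex.integral_comp_polarCoord_symm (Set.indicator (Metric.ball 0 1) G)]
    have hcong : ∀ p ∈ polarCoord.target,
        p.1 • (Set.indicator (Metric.ball (0:ℂ) 1) G) (Complex.polarCoord.symm p)
          = S.indicator (fun p : ℝ × ℝ => p.1 * G (Complex.polarCoord.symm p)) p := by
      rintro ⟨r, θ⟩ ⟨hr, hθ⟩
      simp only [Set.mem_Ioi] at hr
      by_cases h1 : r < 1
      · have hmem : Complex.polarCoord.symm (r, θ) ∈ Metric.ball (0:ℂ) 1 := by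
          rw [mem_ball_zero_iff, hnorm, abs_of_pos hr]; exact h1
        have hmemS : ((r, θ) : ℝ × ℝ) ∈ S := ⟨⟨hr, h1⟩, hθ⟩
        rw [Set.indicator_of_mem hmem, Set.indicator_of_mem hmemS, smul_eq_mul]
      · have hmem : Complex.polarCoord.symm (r, θ) ∉ Metric.ball (0:ℂ) 1 := by
          rw [mem_ball_zero_iff, hnorm, abs_of_pos hr]; simpa using h1
        have hmemS : ((r, θ) : ℝ × ℝ) ∉ S := by
          intro hc; exact h1 hc.1.2
        rw [Set.indicator_of_notMem hmem, Set.indicator_of_notMem hmemS, smul_zero]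
    rw [setIntegral_congr_fun polarCoord.open_target.measurableSet hcong,
      setIntegral_indicator hSmeas, Set.inter_eq_right.mpr hSsub]
  -- integrability part
  have hψ : MeasurePreserving (Complex.measurableEquivRealProd.symm) :=
    Complex.volume_preserving_equiv_real_prod.symm
  have hGψ : IntegrableOn (G ∘ Complex.measurableEquivRealProd.symm)
      (Complex.measurableEquivRealProd.symm ⁻¹' (Metric.ball 0 1)) := by
    exact ((hψ.restrict_preimage measurableSet_ball).integrable_comp_emb
      (MeasurableEquiv.measurableEmbedding _)).mpr hGint
  have himgsub : polarCoord.symm '' S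
      ⊆ Complex.measurableEquivRealProd.symm ⁻¹' (Metric.ball 0 1) := by
    rintro x ⟨p, hp, rfl⟩
    have : ‖Complex.polarCoord.symm p‖ = |p.1| := hnorm p
    simp only [Set.mem_preimage, psymm_eq, mem_ball_zero_iff, this]
    rw [abs_of_pos hp.1.1]
    exact hp.1.2
  have hGT : IntegrableOn (G ∘ Complex.measurableEquivRealProd.symm)
      (polarCoord.symm '' S) := hGψ.mono_set himgsub
  have hB : ∀ p ∈ S, HasFDerivWithinAt polarCoord.symm
      (LinearMap.toContinuousLinearMap (Matrix.toLin (Module.Basis.finTwoProd ℝ) (Module.Basis.finTwoProd ℝ)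
        !![Real.cos p.2, -p.1 * Real.sin p.2; Real.sin p.2, p.1 * Real.cos p.2])) S p :=
    fun p _ => (hasFDerivAt_polarCoord_symm p).hasFDerivWithinAt
  have hinj : Set.InjOn polarCoord.symm S :=
    polarCoord.symm.injOn.mono hSsub
  have hint2 := (integrableOn_image_iff_integrableOn_abs_det_fderiv_smul volume hSmeas hB hinj
    (G ∘ Complex.measurableEquivRealProd.symm)).mp hGT
  refine ⟨heq, ?_⟩
  refine (hint2.congr_fun (fun p hp => ?_) hSmeas)
  beta_reduce
  rw [polar_det, abs_of_pos hp.1.1, smul_eq_mul, Function.comp_apply, psymm_eq]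


lemma sq_intervalIntegral_le' {f : ℝ → ℝ} {b : ℝ} (hb : 0 < b)
    (hf : IntervalIntegrable f volume 0 b)
    (hf2 : IntervalIntegrable (fun x => f x ^ 2) volume 0 b) :
    (∫ x in (0:ℝ)..b, f x) ^ 2 ≤ b * ∫ x in (0:ℝ)..b, f x ^ 2 := by
  set A := ∫ x in (0:ℝ)..b, f x with hA
  have key : (0:ℝ) ≤ ∫ x in (0:ℝ)..b, (b * f x - A) ^ 2 :=
    intervalIntegral.integral_nonneg hb.le (fun u _ => sq_nonneg _)
  have expand : ∫ x in (0:ℝ)..b, (b * f x - A) ^ 2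
      = b ^ 2 * (∫ x in (0:ℝ)..b, f x ^ 2) - (2 * b * A) * A + A ^ 2 * b := by
    have hfun : (fun x => (b * f x - A) ^ 2)
        = fun x => b ^ 2 * f x ^ 2 - (2 * b * A) * f x + A ^ 2 := by
      funext x; ring
    rw [hfun, intervalIntegral.integral_add (((hf2.const_mul _).sub (hf.const_mul _)))
      intervalIntegrable_const,
      intervalIntegral.integral_sub (hf2.const_mul _) (hf.const_mul _),
      intervalIntegral.integral_const_mul, intervalIntegral.integral_const_mul,
      intervalIntegral.integral_const]
    simp [hA]
    ring
  rw [expand] at key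
  nlinarith [sq_nonneg A]

lemma circle_sq_bound {g : ℂ → ℂ} (hg : DifferentiableOn ℂ g (Metric.ball (0:ℂ) 1))
    {r : ℝ} (h0 : 0 < r) (h1 : r < 1) :
    2 * Real.pi * ‖g 0‖ ^ 2 ≤ ∫ θ in (0:ℝ)..(2 * Real.pi), ‖g (circleMap 0 r θ)‖ ^ 2 := by
  have h2π : (0:ℝ) < 2 * Real.pi := by positivity
  have hsub : Metric.closedBall (0:ℂ) r ⊆ Metric.ball 0 1 := closedBall_subset_ball h1
  have hgc : DifferentiableOn ℂ g (Metric.closedBall 0 r) := hg.mono hsub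
  have hC := hgc.circleIntegral_sub_inv_smul (Metric.mem_ball_self h0)
  -- continuity of the composition
  have hcont : Continuous fun θ => g (circleMap 0 r θ) := by
    apply hg.continuousOn.comp_continuous (continuous_circleMap 0 r)
    intro θ
    apply hsub.trans' Metric.sphere_subset_closedBall (circleMap_mem_sphere 0 h0.le θ)
  have hf : IntervalIntegrable (fun θ => ‖g (circleMap 0 r θ)‖) volume 0 (2 * Real.pi) :=
    (hcont.norm).intervalIntegrable _ _
  have hf2 : IntervalIntegrable (fun θ => ‖g (circleMap 0 r θ)‖ ^ 2) volume 0 (2 * Real.pi) :=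
    ((hcont.norm).pow 2).intervalIntegrable _ _
  -- mean value bound
  have hmv : 2 * Real.pi * ‖g 0‖ ≤ ∫ θ in (0:ℝ)..(2 * Real.pi), ‖g (circleMap 0 r θ)‖ := by
    have hnormC : ‖(2 * Real.pi * Complex.I) • g 0‖ = 2 * Real.pi * ‖g 0‖ := by
      rw [norm_smul]
      simp [abs_of_pos Real.pi_pos]
    rw [← hnormC, ← hC]
    rw [circleIntegral]
    refine le_trans (intervalIntegral.norm_integral_le_integral_norm h2π.le) ?_
    apply le_of_eq
    apply intervalIntegral.integral_congr
    intro θ _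
    simp only [deriv_circleMap, sub_zero, norm_smul, norm_mul, norm_inv,
      Complex.norm_I, mul_one, norm_circleMap_zero, abs_of_pos h0]
    field_simp
  have hCS := sq_intervalIntegral_le' h2π hf hf2
  have hnn : 0 ≤ ∫ θ in (0:ℝ)..(2 * Real.pi), ‖g (circleMap 0 r θ)‖ :=
    le_trans (by positivity) hmv
  have hsq : (2 * Real.pi * ‖g 0‖) ^ 2
      ≤ (∫ θ in (0:ℝ)..(2 * Real.pi), ‖g (circleMap 0 r θ)‖) ^ 2 :=
    pow_le_pow_left₀ (by positivity) hmv 2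
  nlinarith [Real.pi_pos, hsq, hCS]


lemma weight_integral : ∫ r in (0:ℝ)..1, r * (1 - r ^ 2) ^ 2 = 1 / 6 := by
  have hfun : (fun r : ℝ => r * (1 - r ^ 2) ^ 2)
      = fun r : ℝ => r - 2 * r ^ 3 + r ^ 5 := by
    funext r; ring
  have h1 : IntervalIntegrable (fun r : ℝ => r) volume 0 1 :=
    continuous_id.intervalIntegrable _ _
  have h3 : IntervalIntegrable (fun r : ℝ => 2 * r ^ 3) volume 0 1 :=
    (continuous_const.mul (continuous_pow 3)).intervalIntegrable _ _
  have h5 : IntervalIntegrable (fun r : ℝ => r ^ 5) volume 0 1 :=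
    (continuous_pow 5).intervalIntegrable _ _
  rw [hfun, intervalIntegral.integral_add (h1.sub h3) h5,
    intervalIntegral.integral_sub h1 h3, intervalIntegral.integral_const_mul,
    integral_id, integral_pow, integral_pow]
  norm_num

lemma polar_circleMap (r θ : ℝ) : Complex.polarCoord.symm (r, θ) = circleMap 0 r θ := by
  simp [circleMap, Complex.exp_mul_I, ← Complex.ofReal_cos, ← Complex.ofReal_sin]

lemma Ioo_to_circle {f : ℝ → ℝ} (hper : Function.Periodic f (2 * Real.pi)) :
    ∫ θ in Set.Ioo (-Real.pi) Real.pi, f θ = ∫ θ in (0:ℝ)..(2 * Real.pi), f θ := by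
  rw [← integral_Ioc_eq_integral_Ioo,
    ← intervalIntegral.integral_of_le (by linarith [Real.pi_pos] : -Real.pi ≤ Real.pi)]
  have h := hper.intervalIntegral_add_eq (-Real.pi) 0
  rw [show -Real.pi + 2 * Real.pi = Real.pi by ring, zero_add] at h
  exact h

end AuxHarnack

/-- Proposition 4.5 (Takhtajan–Teo, Teo): if `μ = ((1-|z|²)²/4) conj(q)` is a harmonic
Beltrami differential on the unit disk (with `q` holomorphic) of finite Weil–Petersson
norm `‖μ‖_WP = (∫_𝔻 |μ|² dA)^{1/2}`, then `sup_{z ∈ 𝔻} |μ(z)| ≤ √(3/(4π)) ‖μ‖_WP`. -/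
theorem harnack_sup_bound (q : ℂ → ℂ)
    (hq : DifferentiableOn ℂ q (Metric.ball (0 : ℂ) 1))
    (μ : ℂ → ℂ)
    (hμ : ∀ z, μ z = ((((1 - ‖z‖ ^ 2) ^ 2 / 4 : ℝ)) : ℂ) * (starRingEnd ℂ) (q z))
    (hint : IntegrableOn (fun z => ‖μ z‖ ^ 2 * rho z) (Metric.ball (0 : ℂ) 1)) :
    ∀ z ∈ Metric.ball (0 : ℂ) 1,
      ‖μ z‖ ≤ Real.sqrt (3 / (4 * Real.pi)) *
        Real.sqrt (∫ z in Metric.ball (0 : ℂ) 1, ‖μ z‖ ^ 2 * rho z) := by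
  intro w hw
  have hπ := Real.pi_pos
  have hw1 : ‖w‖ < 1 := mem_ball_zero_iff.mp hw
  set D : Set ℂ := Metric.ball (0:ℂ) 1 with hD
  set F : ℂ → ℝ := fun z => ‖q z‖ ^ 2 * (1 - ‖z‖ ^ 2) ^ 2 / 4 with hF
  set g : ℂ → ℂ := fun u => q (mob w u) * (mobD w u) ^ 2 with hg
  set G : ℂ → ℝ := fun u => ‖g u‖ ^ 2 * (1 - ‖u‖ ^ 2) ^ 2 / 4 with hG
  set I : ℝ := ∫ z in Metric.ball (0:ℂ) 1, ‖μ z‖ ^ 2 * rho z with hIdef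
  -- Step A: pointwise identity on the disk
  have hpt : ∀ z ∈ D, ‖μ z‖ ^ 2 * rho z = F z := by
    intro z hz
    have hz1 : ‖z‖ < 1 := mem_ball_zero_iff.mp hz
    have hpos : 0 < 1 - ‖z‖ ^ 2 := by nlinarith [norm_nonneg z]
    rw [hμ z, norm_mul, Complex.norm_real, Real.norm_eq_abs,
      _root_.abs_of_nonneg (by positivity), RCLike.norm_conj]
    simp only [rho, hF]
    have key : ∀ A Q : ℝ, A ≠ 0 → (A ^ 2 / 4 * Q) ^ 2 * (4 / A ^ 2) = Q ^ 2 * A ^ 2 / 4 := by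
      intro A Q hA
      field_simp
    exact key (1 - ‖z‖ ^ 2) ‖q z‖ hpos.ne'
  have hI1 : I = ∫ z in D, F z :=
    MeasureTheory.setIntegral_congr_fun measurableSet_ball hpt
  have hFint : IntegrableOn F D := hint.congr_fun hpt measurableSet_ball
  -- Step B: Möbius change of variables
  have hmobd : ∀ u ∈ D, 1 + (starRingEnd ℂ) w * u ≠ 0 := fun u hu =>
    mob_denom_ne w u hw1 (mem_ball_zero_iff.mp hu)
  have hf'w : ∀ u ∈ D, HasFDerivWithinAt (mob w)
      ((ContinuousLinearMap.smulRight (1 : ℂ →L[ℂ] ℂ) (mobD w u)).restrictScalars ℝ) D u :=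
    fun u hu =>
      (((mob_hasDerivAt w u (hmobd u hu)).hasFDerivAt).restrictScalars ℝ).hasFDerivWithinAt
  have hmob_inv : ∀ a ∈ D, mob (-w) (mob w a) = a := by
    intro a ha
    have := mob_mob (-w) a (by simpa using hw1) (mem_ball_zero_iff.mp ha)
    rwa [neg_neg] at this
  have hinj : Set.InjOn (mob w) D := by
    intro a ha b hb hab
    rw [← hmob_inv a ha, ← hmob_inv b hb, hab]
  have himg : mob w '' D = D := by
    apply Set.Subset.antisymm
    · rintro _ ⟨u, hu, rfl⟩
      exact mem_ball_zero_iff.mpr (mob_norm_lt w u hw1 (mem_ball_zero_iff.mp hu))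
    · intro z hz
      exact ⟨mob (-w) z,
        mem_ball_zero_iff.mpr (mob_norm_lt (-w) z (by simpa using hw1)
          (mem_ball_zero_iff.mp hz)),
        mob_mob w z hw1 (mem_ball_zero_iff.mp hz)⟩
  have hdet : ∀ u : ℂ,
      |((ContinuousLinearMap.smulRight (1 : ℂ →L[ℂ] ℂ) (mobD w u)).restrictScalars ℝ).det|
        = ‖mobD w u‖ ^ 2 := by
    intro u
    rw [det_restrictScalars_smulRight, _root_.abs_of_nonneg (Complex.normSq_nonneg _),
      ← Complex.sq_norm]
  have hptG : ∀ u ∈ D,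
      |((ContinuousLinearMap.smulRight (1 : ℂ →L[ℂ] ℂ) (mobD w u)).restrictScalars ℝ).det|
        • F (mob w u) = G u := by
    intro u hu
    have hu1 : ‖u‖ < 1 := mem_ball_zero_iff.mp hu
    have hid := mob_norm_identity w u hw1 hu1
    have hgu : ‖g u‖ ^ 2 = ‖q (mob w u)‖ ^ 2 * ‖mobD w u‖ ^ 4 := by
      rw [hg]; simp only [norm_mul, norm_pow]; ring
    rw [hdet, smul_eq_mul]
    simp only [hF, hG]
    rw [hgu, hid]
    ring
  have hI2 : ∫ z in D, F z = ∫ u in D, G u := by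
    have hcv := integral_image_eq_integral_abs_det_fderiv_smul volume
      measurableSet_ball hf'w hinj F
    rw [himg] at hcv
    rw [hcv]
    exact MeasureTheory.setIntegral_congr_fun measurableSet_ball hptG
  have hGint : IntegrableOn G D := by
    have h1 := (integrableOn_image_iff_integrableOn_abs_det_fderiv_smul volume
      measurableSet_ball hf'w hinj F).mp (by rw [himg]; exact hFint)
    exact h1.congr_fun hptG measurableSet_ball
  -- Step C: g is holomorphic on the disk
  have hmaps : Set.MapsTo (mob w) D D := fun u hu =>
    mem_ball_zero_iff.mpr (mob_norm_lt w u hw1 (mem_ball_zero_iff.mp hu))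
  have hmobdiff : DifferentiableOn ℂ (mob w) D := fun u hu =>
    ((mob_hasDerivAt w u (hmobd u hu)).differentiableAt).differentiableWithinAt
  have hmobDdiff : DifferentiableOn ℂ (mobD w) D := by
    have hrfl : mobD w = fun u => (1 - w * (starRingEnd ℂ) w) / (1 + (starRingEnd ℂ) w * u) ^ 2 :=
      rfl
    rw [hrfl]
    intro u hu
    apply DifferentiableAt.differentiableWithinAt
    exact (differentiableAt_const _).div
      (((differentiableAt_id.const_mul _).const_add _).pow 2)
      (pow_ne_zero 2 (hmobd u hu))
  have hgdiff : DifferentiableOn ℂ g D :=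
    (hq.comp hmobdiff hmaps).mul (hmobDdiff.pow 2)
  -- Step D: polar coordinates
  obtain ⟨hpolar, hSint⟩ := polar_step G hGint
  set S : Set (ℝ × ℝ) := Set.Ioo (0:ℝ) 1 ×ˢ Set.Ioo (-Real.pi) Real.pi with hS
  set h : ℝ × ℝ → ℝ := fun p => p.1 * G (Complex.polarCoord.symm p) with hh
  -- Step E: Fubini
  have hprodmeas : (volume : Measure (ℝ × ℝ)).restrict S
      = (volume.restrict (Set.Ioo (0:ℝ) 1)).prod (volume.restrict (Set.Ioo (-Real.pi) Real.pi)) := by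
    rw [MeasureTheory.Measure.volume_eq_prod, ← Measure.prod_restrict]
  have hIntProd : Integrable h
      ((volume.restrict (Set.Ioo (0:ℝ) 1)).prod (volume.restrict (Set.Ioo (-Real.pi) Real.pi))) := by
    rw [← hprodmeas]; exact hSint
  have hFub : ∫ p in S, h p
      = ∫ r in Set.Ioo (0:ℝ) 1, ∫ θ in Set.Ioo (-Real.pi) Real.pi, h (r, θ) := by
    calc ∫ p in S, h p = ∫ p, h p ∂((volume.restrict (Set.Ioo (0:ℝ) 1)).prod
          (volume.restrict (Set.Ioo (-Real.pi) Real.pi))) := by rw [← hprodmeas]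
      _ = _ := MeasureTheory.integral_prod _ hIntProd
  -- inner bound for each radius
  set c : ℝ := ‖g 0‖ ^ 2 with hc
  have hinner : ∀ r ∈ Set.Ioo (0:ℝ) 1,
      r * (1 - r ^ 2) ^ 2 / 4 * (2 * Real.pi * c)
        ≤ ∫ θ in Set.Ioo (-Real.pi) Real.pi, h (r, θ) := by
    intro r hr
    obtain ⟨hr0, hr1⟩ := hr
    have hcm : ∀ θ : ℝ, ‖circleMap 0 r θ‖ = r := by
      intro θ
      rw [norm_circleMap_zero, abs_of_pos hr0]
    have hrw : ∀ θ : ℝ, h (r, θ)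
        = r * (1 - r ^ 2) ^ 2 / 4 * ‖g (circleMap 0 r θ)‖ ^ 2 := by
      intro θ
      simp only [hh, hG, polar_circleMap, hcm]
      ring
    have hper : Function.Periodic (fun θ : ℝ => ‖g (circleMap 0 r θ)‖ ^ 2) (2 * Real.pi) :=
      (periodic_circleMap 0 r).comp fun z => ‖g z‖ ^ 2
    have hcb := circle_sq_bound hgdiff hr0 hr1
    calc r * (1 - r ^ 2) ^ 2 / 4 * (2 * Real.pi * c)
        ≤ r * (1 - r ^ 2) ^ 2 / 4 * ∫ θ in (0:ℝ)..(2 * Real.pi), ‖g (circleMap 0 r θ)‖ ^ 2 := by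
          apply mul_le_mul_of_nonneg_left hcb (by nlinarith)
      _ = r * (1 - r ^ 2) ^ 2 / 4 * ∫ θ in Set.Ioo (-Real.pi) Real.pi, ‖g (circleMap 0 r θ)‖ ^ 2 := by
          rw [Ioo_to_circle hper]
      _ = ∫ θ in Set.Ioo (-Real.pi) Real.pi, h (r, θ) := by
          rw [← MeasureTheory.integral_const_mul]
          exact (MeasureTheory.setIntegral_congr_fun measurableSet_Ioo
            (fun θ _ => (hrw θ))).symm
  -- integrate the lower bound
  have hφint : IntegrableOn (fun r : ℝ => r * (1 - r ^ 2) ^ 2 / 4 * (2 * Real.pi * c))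
      (Set.Ioo (0:ℝ) 1) := by
    have hcont : Continuous fun r : ℝ => r * (1 - r ^ 2) ^ 2 / 4 * (2 * Real.pi * c) :=
      ((continuous_id.mul ((continuous_const.sub (continuous_pow 2)).pow 2)).div_const 4).mul
        continuous_const
    exact (hcont.integrableOn_Icc (a := 0) (b := 1)).mono_set Set.Ioo_subset_Icc_self
  have hinner_int : IntegrableOn
      (fun r => ∫ θ in Set.Ioo (-Real.pi) Real.pi, h (r, θ)) (Set.Ioo (0:ℝ) 1) :=
    hIntProd.integral_prod_left
  have hmono := MeasureTheory.setIntegral_mono_on hφint hinner_int measurableSet_Ioo hinner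
  have hφval : ∫ r in Set.Ioo (0:ℝ) 1, r * (1 - r ^ 2) ^ 2 / 4 * (2 * Real.pi * c)
      = Real.pi * c / 12 := by
    rw [← MeasureTheory.integral_Ioc_eq_integral_Ioo,
      ← intervalIntegral.integral_of_le (by norm_num : (0:ℝ) ≤ 1)]
    have : (fun r : ℝ => r * (1 - r ^ 2) ^ 2 / 4 * (2 * Real.pi * c))
        = fun r : ℝ => (Real.pi * c / 2) * (r * (1 - r ^ 2) ^ 2) := by
      funext r; ring
    rw [this, intervalIntegral.integral_const_mul, weight_integral]
    ring
  -- total lower bound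
  have hIC : Real.pi * c / 12 ≤ I := by
    have e1 : I = ∫ p in S, h p := by
      rw [hI1, hI2]; exact hpolar
    rw [e1, hFub, ← hφval]
    exact hmono
  -- Step F : ‖g 0‖ = 4 ‖μ w‖
  have hg0 : ‖g 0‖ = 4 * ‖μ w‖ := by
    have hm0 : mob w 0 = w := by simp [mob]
    have hmD0 : mobD w 0 = 1 - w * (starRingEnd ℂ) w := by simp [mobD]
    have hpos : (0:ℝ) < 1 - ‖w‖ ^ 2 := by nlinarith [norm_nonneg w]
    have hnorm1 : ‖(1:ℂ) - w * (starRingEnd ℂ) w‖ = 1 - ‖w‖ ^ 2 := by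
      rw [Complex.mul_conj, ← Complex.ofReal_one, ← Complex.ofReal_sub, Complex.norm_real,
        Real.norm_eq_abs, ← Complex.sq_norm, _root_.abs_of_pos hpos]
    rw [hg]
    simp only [hm0, hmD0, norm_mul, norm_pow, hnorm1]
    rw [hμ w, norm_mul, Complex.norm_real, Real.norm_eq_abs, _root_.abs_of_nonneg (by positivity),
      RCLike.norm_conj]
    ring
  have hμsq : ‖μ w‖ ^ 2 ≤ 3 / (4 * Real.pi) * I := by
    have h4 : 4 * Real.pi / 3 * ‖μ w‖ ^ 2 ≤ I := by
      have : Real.pi * c / 12 = 4 * Real.pi / 3 * ‖μ w‖ ^ 2 := by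
        rw [hc, hg0]; ring
      linarith [hIC, this.symm.le]
    calc ‖μ w‖ ^ 2 = 3 / (4 * Real.pi) * (4 * Real.pi / 3 * ‖μ w‖ ^ 2) := by
          field_simp
      _ ≤ 3 / (4 * Real.pi) * I := by
          apply mul_le_mul_of_nonneg_left h4 (by positivity)
  calc ‖μ w‖ = Real.sqrt (‖μ w‖ ^ 2) := (Real.sqrt_sq (norm_nonneg _)).symm
    _ ≤ Real.sqrt (3 / (4 * Real.pi) * I) := Real.sqrt_le_sqrt hμsq
    _ = Real.sqrt (3 / (4 * Real.pi)) * Real.sqrt I := Real.sqrt_mul (by positivity) _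
end

section
/- Let Φ : 𝔻 → ℂ be holomorphic and define f(z) = (1-|z|²)^4 |Φ(z)|² / 16 (that is, f = |Φ|²/ρ²). Then for every z ∈ 𝔻 the Euclidean Laplacian satisfies Δf(z) ≥ -16 f(z)/(1-|z|²)²; equivalently, Δ_ρ f ≥ -4 f on all of 𝔻, where Δ_ρ = ρ(z)^{-1}(∂²/∂x² + ∂²/∂y²). -/
open Complex

noncomputable def mulCLM (c : ℂ) : ℂ →L[ℝ] ℂ := c • ContinuousLinearMap.id ℝ ℂ

@[simp] lemma mulCLM_apply (c v : ℂ) : mulCLM c v = c * v := rfl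

lemma AnalyticAt.derivC {A : ℂ → ℂ} {p : ℂ} (h : AnalyticAt ℂ A p) :
    AnalyticAt ℂ (deriv A) p := by
  have hs : AnalyticOnNhd ℂ A {y | AnalyticAt ℂ A y} := fun y hy => hy
  exact hs.deriv p h

noncomputable def conjCLM : ℂ →L[ℝ] ℂ := Complex.conjCLE.toContinuousLinearMap

@[simp] lemma conjCLM_apply (v : ℂ) : conjCLM v = (starRingEnd ℂ) v := rfl

-- first derivative of normSq ∘ A
lemma hasFDerivAt_normSq_comp {A : ℂ → ℂ} {a z : ℂ} (hA : HasDerivAt A a z) :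
    HasFDerivAt (fun y => Complex.normSq (A y))
      (Complex.reCLM.comp ((A z • (conjCLM.comp (mulCLM a)))
        + ((starRingEnd ℂ) (A z)) • mulCLM a)) z := by
  have h1 : HasFDerivAt A (mulCLM a) z := by
    have := hA.hasFDerivAt.restrictScalars ℝ
    refine this.congr_fderiv ?_
    ext v
    simp [mulCLM, mul_comm]
  have h2 : HasFDerivAt (fun y => (starRingEnd ℂ) (A y))
      (conjCLM.comp (mulCLM a)) z :=
    conjCLM.hasFDerivAt.comp z h1
  have h3 := (h2.mul h1)
  have h4 := Complex.reCLM.hasFDerivAt.comp z h3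
  have e : (fun y => Complex.normSq (A y)) = ⇑reCLM ∘ ((fun y => (starRingEnd ℂ) (A y)) * A) := by
    funext y
    show Complex.normSq (A y) = ((starRingEnd ℂ) (A y) * A y).re
    rw [mul_comm, Complex.mul_conj, Complex.ofReal_re]
  rw [e]
  refine h4.congr_fderiv ?_
  · rw [ContinuousLinearMap.comp_add, ContinuousLinearMap.comp_add, add_comm]

lemma re_conj_mul (X Y : ℂ) : (X * (starRingEnd ℂ) Y).re = ((starRingEnd ℂ) X * Y).re := by
  rw [← Complex.conj_re (X * (starRingEnd ℂ) Y), map_mul, Complex.conj_conj]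

lemma normSq_fderiv_apply {A : ℂ → ℂ} {z : ℂ} (hA : AnalyticAt ℂ A z) (w : ℂ) :
    fderiv ℝ (fun y => Complex.normSq (A y)) z w
      = 2 * ((starRingEnd ℂ) (A z) * (deriv A z * w)).re := by
  have hd : HasDerivAt A (deriv A z) z := hA.differentiableAt.hasDerivAt
  rw [(hasFDerivAt_normSq_comp hd).fderiv]
  simp only [ContinuousLinearMap.add_apply, ContinuousLinearMap.coe_comp',
    Function.comp_apply, ContinuousLinearMap.coe_smul', Pi.smul_apply,
    Complex.reCLM_apply, mulCLM_apply, conjCLM_apply, smul_eq_mul]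
  rw [Complex.add_re, re_conj_mul]
  ring

/-- second derivative data -/
noncomputable def D2 (A : ℂ → ℂ) (p w : ℂ) : ℂ →L[ℝ] ℝ :=
  (2:ℝ) • (Complex.reCLM.comp
    ((starRingEnd ℂ) (A p) • ((mulCLM w).comp (mulCLM (deriv (deriv A) p)))
      + (deriv A p * w) • (conjCLM.comp (mulCLM (deriv A p)))))

lemma D2_apply (A : ℂ → ℂ) (p w v : ℂ) :
    D2 A p w v = 2 * ((starRingEnd ℂ) (A p) * (w * (deriv (deriv A) p * v))
      + (deriv A p * w) * (starRingEnd ℂ) (deriv A p * v)).re := by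
  simp only [D2, ContinuousLinearMap.coe_smul', Pi.smul_apply,
    ContinuousLinearMap.coe_comp', Function.comp_apply, ContinuousLinearMap.add_apply,
    Complex.reCLM_apply, mulCLM_apply, conjCLM_apply, smul_eq_mul]

lemma hasFDerivAt_phi {A : ℂ → ℂ} {p : ℂ} (hA : AnalyticAt ℂ A p) (w : ℂ) :
    HasFDerivAt (fun z => 2 * ((starRingEnd ℂ) (A z) * (deriv A z * w)).re) (D2 A p w) p := by
  have hd : HasDerivAt A (deriv A p) p := hA.differentiableAt.hasDerivAt
  have h1 : HasFDerivAt A (mulCLM (deriv A p)) p := by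
    have := hd.hasFDerivAt.restrictScalars ℝ
    refine this.congr_fderiv ?_
    ext v; simp [mulCLM, mul_comm]
  have hdd : HasDerivAt (deriv A) (deriv (deriv A) p) p :=
    hA.derivC.differentiableAt.hasDerivAt
  have h3 : HasFDerivAt (deriv A) (mulCLM (deriv (deriv A) p)) p := by
    have := hdd.hasFDerivAt.restrictScalars ℝ
    refine this.congr_fderiv ?_
    ext v; simp [mulCLM, mul_comm]
  have h2 : HasFDerivAt (fun y => (starRingEnd ℂ) (A y))
      (conjCLM.comp (mulCLM (deriv A p))) p :=
    conjCLM.hasFDerivAt.comp p h1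
  have h4 : HasFDerivAt (fun z => deriv A z * w)
      ((mulCLM w).comp (mulCLM (deriv (deriv A) p))) p := by
    have := h3.mul_const w
    refine this.congr_fderiv ?_
    ext v; simp [mulCLM]
  have h5 := h2.mul h4
  have h6 := Complex.reCLM.hasFDerivAt.comp p h5
  have h7 := h6.const_mul (2:ℝ)
  exact h7

/-- The Euclidean Laplacian `Δg = ∂²g/∂x² + ∂²g/∂y²` of `g : ℂ → ℝ`, written as the sum
of the second directional derivatives in the directions `1` and `I`. -/
noncomputable def lap (g : ℂ → ℝ) (p : ℂ) : ℝ :=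
  fderiv ℝ (fun z => fderiv ℝ g z 1) p 1 +
    fderiv ℝ (fun z => fderiv ℝ g z Complex.I) p Complex.I

lemma D2_eval {A : ℂ → ℂ} {p : ℂ} :
    D2 A p 1 1 + D2 A p Complex.I Complex.I = 4 * Complex.normSq (deriv A p) := by
  rw [D2_apply, D2_apply]
  simp only [Complex.add_re, Complex.mul_re, Complex.mul_im, Complex.normSq_apply,
    Complex.conj_re, Complex.conj_im, Complex.I_re, Complex.I_im, Complex.one_re,
    Complex.one_im]
  ring

lemma lap_sum (c : Fin 5 → ℝ) (A : Fin 5 → ℂ → ℂ) (p : ℂ)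
    (hA : ∀ k, AnalyticAt ℂ (A k) p) :
    lap (fun z => ∑ k, c k * Complex.normSq (A k z)) p
      = ∑ k, c k * (4 * Complex.normSq (deriv (A k) p)) := by
  have key : ∀ w : ℂ,
      fderiv ℝ (fun z => fderiv ℝ (fun y => ∑ k, c k * Complex.normSq (A k y)) z w) p
        = ∑ k, c k • D2 (A k) p w := by
    intro w
    have hev : (fun z => fderiv ℝ (fun y => ∑ k, c k * Complex.normSq (A k y)) z w)
        =ᶠ[nhds p]
        (fun z => ∑ k, c k * (2 * ((starRingEnd ℂ) (A k z) * (deriv (A k) z * w)).re)) := by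
      have hall : ∀ᶠ z in nhds p, ∀ k, AnalyticAt ℂ (A k) z :=
        Filter.eventually_all.2 fun k => (hA k).eventually_analyticAt
      filter_upwards [hall] with z hz
      have hF : HasFDerivAt (fun y => ∑ k, c k * Complex.normSq (A k y))
          (∑ k, c k • fderiv ℝ (fun y => Complex.normSq (A k y)) z) z := by
        apply HasFDerivAt.fun_sum
        intro k _
        exact (((hz k).differentiableAt.hasDerivAt |> hasFDerivAt_normSq_comp).differentiableAt.hasFDerivAt).const_mul (c k)
      rw [hF.fderiv]
      rw [ContinuousLinearMap.sum_apply]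
      refine Finset.sum_congr rfl fun k _ => ?_
      rw [ContinuousLinearMap.smul_apply, smul_eq_mul, normSq_fderiv_apply (hz k) w]
    rw [hev.fderiv_eq]
    have : HasFDerivAt
        (fun z => ∑ k, c k * (2 * ((starRingEnd ℂ) (A k z) * (deriv (A k) z * w)).re))
        (∑ k, c k • D2 (A k) p w) p := by
      apply HasFDerivAt.fun_sum
      intro k _
      exact (hasFDerivAt_phi (hA k) w).const_mul (c k)
    exact this.fderiv
  unfold lap
  rw [key 1, key Complex.I, ContinuousLinearMap.sum_apply, ContinuousLinearMap.sum_apply,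
    ← Finset.sum_add_distrib]
  refine Finset.sum_congr rfl fun k _ => ?_
  rw [ContinuousLinearMap.smul_apply, ContinuousLinearMap.smul_apply, smul_eq_mul,
    smul_eq_mul, ← mul_add, D2_eval]

lemma nrm_sq (x : ℂ) : ‖x‖ ^ 2 = Complex.normSq x := by
  rw [Complex.sq_norm]

set_option maxHeartbeats 1000000 in
lemma final_real (zr zi ar ai br bi : ℝ) :
    -16 * ((1-(zr^2+zi^2))^4 * (ar^2+ai^2) / 16) ≤
      (1/16 * (4 * (br^2+bi^2))
        + (-4/16) * (4 * ((ar + (zr*br - zi*bi))^2 + (ai + (zr*bi + zi*br))^2))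
        + (6/16) * (4 * ((2*(zr*ar - zi*ai) + ((zr^2-zi^2)*br - 2*zr*zi*bi))^2
            + (2*(zr*ai + zi*ar) + ((zr^2-zi^2)*bi + 2*zr*zi*br))^2))
        + (-4/16) * (4 * ((3*((zr^2-zi^2)*ar - 2*zr*zi*ai)
              + ((zr^3-3*zr*zi^2)*br - (3*zr^2*zi - zi^3)*bi))^2
            + (3*((zr^2-zi^2)*ai + 2*zr*zi*ar)
              + ((zr^3-3*zr*zi^2)*bi + (3*zr^2*zi - zi^3)*br))^2))
        + (1/16) * (4 * ((4*((zr^3-3*zr*zi^2)*ar - (3*zr^2*zi - zi^3)*ai)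
              + ((zr^4-6*zr^2*zi^2+zi^4)*br - (4*zr^3*zi - 4*zr*zi^3)*bi))^2
            + (4*((zr^3-3*zr*zi^2)*ai + (3*zr^2*zi - zi^3)*ar)
              + ((zr^4-6*zr^2*zi^2+zi^4)*bi + (4*zr^3*zi - 4*zr*zi^3)*br))^2)))
        * (1-(zr^2+zi^2))^2 := by
  set q1 : ℝ := (1-(zr^2+zi^2)) * (4*(1-(zr^2+zi^2))*(zr*ar+zi*ai) - (1-(zr^2+zi^2))^2*br) with hq1
  set q2 : ℝ := (1-(zr^2+zi^2)) * (4*(1-(zr^2+zi^2))*(zr*ai-zi*ar) - (1-(zr^2+zi^2))^2*bi) with hq2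
  have key : (1/16 * (4 * (br^2+bi^2))
        + (-4/16) * (4 * ((ar + (zr*br - zi*bi))^2 + (ai + (zr*bi + zi*br))^2))
        + (6/16) * (4 * ((2*(zr*ar - zi*ai) + ((zr^2-zi^2)*br - 2*zr*zi*bi))^2
            + (2*(zr*ai + zi*ar) + ((zr^2-zi^2)*bi + 2*zr*zi*br))^2))
        + (-4/16) * (4 * ((3*((zr^2-zi^2)*ar - 2*zr*zi*ai)
              + ((zr^3-3*zr*zi^2)*br - (3*zr^2*zi - zi^3)*bi))^2
            + (3*((zr^2-zi^2)*ai + 2*zr*zi*ar)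
              + ((zr^3-3*zr*zi^2)*bi + (3*zr^2*zi - zi^3)*br))^2))
        + (1/16) * (4 * ((4*((zr^3-3*zr*zi^2)*ar - (3*zr^2*zi - zi^3)*ai)
              + ((zr^4-6*zr^2*zi^2+zi^4)*br - (4*zr^3*zi - 4*zr*zi^3)*bi))^2
            + (4*((zr^3-3*zr*zi^2)*ai + (3*zr^2*zi - zi^3)*ar)
              + ((zr^4-6*zr^2*zi^2+zi^4)*bi + (4*zr^3*zi - 4*zr*zi^3)*br))^2)))
        * (1-(zr^2+zi^2))^2
      = -16 * ((1-(zr^2+zi^2))^4 * (ar^2+ai^2) / 16) + (1/4)*(q1^2 + q2^2) := by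
    rw [hq1, hq2]; ring
  rw [key]
  linarith [sq_nonneg q1, sq_nonneg q2]

set_option maxHeartbeats 1000000 in
/-- Lemma 5.1: if `Φ` is holomorphic on the unit disk and `f = |Φ|²/ρ²`, i.e.
`f(z) = (1-|z|²)⁴ |Φ(z)|² / 16`, then `Δf ≥ -16 f/(1-|z|²)²` on all of `𝔻`;
equivalently `Δ_ρ f ≥ -4 f`. -/
theorem laplacian_sq_modulus_lower_bound (Φ : ℂ → ℂ)
    (hΦ : DifferentiableOn ℂ Φ (Metric.ball (0 : ℂ) 1)) :
    ∀ z ∈ Metric.ball (0 : ℂ) 1,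
      lap (fun z => (1 - ‖z‖ ^ 2) ^ 4 * ‖Φ z‖ ^ 2 / 16) z ≥
        -16 * ((1 - ‖z‖ ^ 2) ^ 4 * ‖Φ z‖ ^ 2 / 16) / (1 - ‖z‖ ^ 2) ^ 2 := by
  intro z hz
  have hΦa : ∀ y ∈ Metric.ball (0 : ℂ) 1, AnalyticAt ℂ Φ y := fun y hy =>
    hΦ.analyticAt (Metric.isOpen_ball.mem_nhds hy)
  set A : Fin 5 → ℂ → ℂ :=
    ![Φ, fun y => y * Φ y, fun y => y ^ 2 * Φ y, fun y => y ^ 3 * Φ y, fun y => y ^ 4 * Φ y]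
    with hA
  set c : Fin 5 → ℝ := ![1/16, -4/16, 6/16, -4/16, 1/16] with hc
  have hfun : (fun z => (1 - ‖z‖ ^ 2) ^ 4 * ‖Φ z‖ ^ 2 / 16)
      = fun z => ∑ k, c k * Complex.normSq (A k z) := by
    funext y
    rw [Fin.sum_univ_five]
    simp only [hA, hc, Matrix.cons_val_zero, Matrix.cons_val_one, Matrix.head_cons,
      Matrix.cons_val_two, Matrix.tail_cons, Matrix.cons_val_three, Matrix.cons_val_four,
      nrm_sq, map_mul, map_pow]
    ring
  have hAk : ∀ k, AnalyticAt ℂ (A k) z := by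
    intro k
    have hz' := hΦa z hz
    fin_cases k <;> simp only [hA, Matrix.cons_val_zero, Matrix.cons_val_one, Matrix.head_cons,
      Matrix.cons_val_two, Matrix.tail_cons, Matrix.cons_val_three, Matrix.cons_val_four]
    · exact hz'
    · exact (analyticAt_id).mul hz'
    · exact ((analyticAt_id).pow 2).mul hz'
    · exact ((analyticAt_id).pow 3).mul hz'
    · exact ((analyticAt_id).pow 4).mul hz'
  rw [hfun, lap_sum c A z hAk, Fin.sum_univ_five]
  have hΦd : DifferentiableAt ℂ Φ z := (hΦa z hz).differentiableAt
  have hd1 : deriv (A 1) z = Φ z + z * deriv Φ z := by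
    show deriv (fun y => y * Φ y) z = _
    rw [deriv_fun_mul (c := fun y => y) differentiableAt_id hΦd]
    simp
  have hd0 : deriv (A 0) z = deriv Φ z := by
    have : A 0 = Φ := rfl
    rw [this]
  have hd2 : deriv (A 2) z = 2 * z * Φ z + z ^ 2 * deriv Φ z := by
    show deriv (fun y => y ^ 2 * Φ y) z = _
    rw [deriv_fun_mul (differentiableAt_pow 2) hΦd, deriv_pow_field]
    ring
  have hd3 : deriv (A 3) z = 3 * z ^ 2 * Φ z + z ^ 3 * deriv Φ z := by
    show deriv (fun y => y ^ 3 * Φ y) z = _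
    rw [deriv_fun_mul (differentiableAt_pow 3) hΦd, deriv_pow_field]
    ring
  have hd4 : deriv (A 4) z = 4 * z ^ 3 * Φ z + z ^ 4 * deriv Φ z := by
    show deriv (fun y => y ^ 4 * Φ y) z = _
    rw [deriv_fun_mul (differentiableAt_pow 4) hΦd, deriv_pow_field]
    ring
  rw [hd0, hd1, hd2, hd3, hd4]
  simp only [hc, Matrix.cons_val_zero, Matrix.cons_val_one, Matrix.head_cons,
    Matrix.cons_val_two, Matrix.tail_cons, Matrix.cons_val_three, Matrix.cons_val_four]
  have hu2 : (0:ℝ) < (1 - ‖z‖^2)^2 := by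
    have h1 := mem_ball_zero_iff.1 hz
    have h0 := norm_nonneg z
    have h2 : (0:ℝ) < 1 - ‖z‖^2 := by nlinarith
    exact pow_pos h2 2
  rw [ge_iff_le, div_le_iff₀ hu2, nrm_sq, nrm_sq]
  set zr := z.re with hzr; set zi := z.im with hzi
  set ar := (Φ z).re with har; set ai := (Φ z).im with hai
  set br := (deriv Φ z).re with hbr; set bi := (deriv Φ z).im with hbi
  have csimp : ∀ X : ℂ, Complex.normSq X = X.re^2 + X.im^2 := fun X => by
    rw [Complex.normSq_apply]; ring
  have Et : Complex.normSq z = zr^2+zi^2 := csimp z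
  have Ea : Complex.normSq (Φ z) = ar^2+ai^2 := csimp (Φ z)
  have E0 : Complex.normSq (deriv Φ z) = br^2+bi^2 := csimp (deriv Φ z)
  have E1 : Complex.normSq (Φ z + z * deriv Φ z)
      = (ar + (zr*br - zi*bi))^2 + (ai + (zr*bi + zi*br))^2 := by
    rw [csimp]
    simp only [Complex.add_re, Complex.add_im, Complex.mul_re, Complex.mul_im, ← hzr, ← hzi,
      ← har, ← hai, ← hbr, ← hbi]
    try ring
  have E2 : Complex.normSq (2*z*Φ z + z^2*deriv Φ z)
      = (2*(zr*ar - zi*ai) + ((zr^2-zi^2)*br - 2*zr*zi*bi))^2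
        + (2*(zr*ai + zi*ar) + ((zr^2-zi^2)*bi + 2*zr*zi*br))^2 := by
    rw [csimp]
    simp only [Complex.add_re, Complex.add_im, Complex.mul_re, Complex.mul_im,
      Complex.re_ofNat, Complex.im_ofNat, pow_succ, pow_zero, one_mul,
      Complex.one_re, Complex.one_im, ← hzr, ← hzi, ← har, ← hai, ← hbr, ← hbi]
    try ring
  have E3 : Complex.normSq (3*z^2*Φ z + z^3*deriv Φ z)
      = (3*((zr^2-zi^2)*ar - 2*zr*zi*ai) + ((zr^3-3*zr*zi^2)*br - (3*zr^2*zi - zi^3)*bi))^2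
        + (3*((zr^2-zi^2)*ai + 2*zr*zi*ar) + ((zr^3-3*zr*zi^2)*bi + (3*zr^2*zi - zi^3)*br))^2 := by
    rw [csimp]
    simp only [Complex.add_re, Complex.add_im, Complex.mul_re, Complex.mul_im,
      Complex.re_ofNat, Complex.im_ofNat, pow_succ, pow_zero, one_mul,
      Complex.one_re, Complex.one_im, ← hzr, ← hzi, ← har, ← hai, ← hbr, ← hbi]
    try ring
  have E4 : Complex.normSq (4*z^3*Φ z + z^4*deriv Φ z)
      = (4*((zr^3-3*zr*zi^2)*ar - (3*zr^2*zi - zi^3)*ai)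
          + ((zr^4-6*zr^2*zi^2+zi^4)*br - (4*zr^3*zi - 4*zr*zi^3)*bi))^2
        + (4*((zr^3-3*zr*zi^2)*ai + (3*zr^2*zi - zi^3)*ar)
          + ((zr^4-6*zr^2*zi^2+zi^4)*bi + (4*zr^3*zi - 4*zr*zi^3)*br))^2 := by
    rw [csimp]
    simp only [Complex.add_re, Complex.add_im, Complex.mul_re, Complex.mul_im,
      Complex.re_ofNat, Complex.im_ofNat, pow_succ, pow_zero, one_mul,
      Complex.one_re, Complex.one_im, ← hzr, ← hzi, ← har, ← hai, ← hbr, ← hbi]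
    try ring
  rw [Et, Ea, E0, E1, E2, E3, E4]
  exact final_real zr zi ar ai br bi
end
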